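/- If w ∈ ℝ^m satisfies w_1 > w_2 > ⋯ > w_m > 0, then some positive scalar multiple of w lies in the interior of the simplex S = conv{v_1, …, v_m}, i.e., is a convex combination of v_1, …, v_m with all coefficients strictly positive. -/

import Mathlib

open scoped BigOperators
noncomputable section

def vk (m : ℕ) (k : Fin m) : EuclideanSpace ℝ (Fin m) :=
  WithLp.toLp 2 (fun i => if i ≤ k then (Real.sqrt ((k : ℕ) + 1))⁻¹ else 0)

theorem stmt8 (m : ℕ) (hm : 1 ≤ m) (w : EuclideanSpace ℝ (Fin m))
    (hdec : ∀ i j : Fin m, i < j → w j < w i) (hpos : ∀ i, 0 < w i) :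
    ∃ t : ℝ, 0 < t ∧ ∃ c : Fin m → ℝ, (∀ k, 0 < c k) ∧ ∑ k, c k = 1 ∧
      t • w = ∑ k : Fin m, c k • vk m k := by
  set W : ℕ → ℝ := fun n => if h : n < m then w ⟨n, h⟩ else 0 with hW
  set A : ℕ → ℝ := fun n => W n - W (n + 1) with hA
  have hApos : ∀ n, n < m → 0 < A n := by
    intro n hn
    simp only [hA, hW]
    rw [dif_pos hn]
    by_cases h2 : n + 1 < m
    · rw [dif_pos h2]
      exact sub_pos.2 (hdec ⟨n, hn⟩ ⟨n + 1, h2⟩ (by simp [Fin.lt_def]))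
    · rw [dif_neg h2]
      simpa using hpos ⟨n, hn⟩
  set s : ℝ := ∑ n ∈ Finset.range m, Real.sqrt ((n : ℝ) + 1) * A n with hs
  have hspos : 0 < s := by
    apply Finset.sum_pos
    · intro n hn
      have hn' := Finset.mem_range.1 hn
      exact mul_pos (Real.sqrt_pos.2 (by positivity)) (hApos n hn')
    · exact ⟨0, Finset.mem_range.2 hm⟩
  have htel : ∀ i : Fin m, ∑ n ∈ Finset.Ico (i : ℕ) m, A n = w i := by
    intro i
    have h1 : ∑ n ∈ Finset.Ico (i : ℕ) m, A n =
        ∑ n ∈ Finset.range m, A n - ∑ n ∈ Finset.range (i : ℕ), A n :=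
      Finset.sum_Ico_eq_sub _ i.2.le
    have h2 : ∀ n, ∑ j ∈ Finset.range n, A j = W 0 - W n := by
      intro n
      simpa [hA] using Finset.sum_range_sub' W n
    have hWm : W m = 0 := by simp [hW]
    have hWi : W (i : ℕ) = w i := by simp [hW, i.2]
    rw [h1, h2, h2, hWm, hWi]
    ring
  refine ⟨s⁻¹, inv_pos.2 hspos,
    fun k => Real.sqrt ((k : ℕ) + 1) * A k / s, ?_, ?_, ?_⟩
  · intro k
    exact div_pos (mul_pos (Real.sqrt_pos.2 (by positivity)) (hApos k k.2)) hspos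
  · rw [← Finset.sum_div]
    rw [Fin.sum_univ_eq_sum_range (fun n => Real.sqrt ((n : ℝ) + 1) * A n) m]
    field_simp
    exact hs.symm
  · ext i
    have lhs : (s⁻¹ • w) i = s⁻¹ * w i := rfl
    have rhs : (∑ k : Fin m, (Real.sqrt ((k : ℕ) + 1) * A k / s) • vk m k) i =
        ∑ k : Fin m, (Real.sqrt ((k : ℕ) + 1) * A k / s) * vk m k i := by
      rw [WithLp.ofLp_sum, Finset.sum_apply]
      exact Finset.sum_congr rfl fun k _ => rfl
    rw [lhs, rhs]
    have step : ∀ k : Fin m,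
        (Real.sqrt ((k : ℕ) + 1) * A k / s) * vk m k i =
        if (i : ℕ) ≤ (k : ℕ) then A k / s else 0 := by
      intro k
      simp only [vk]
      by_cases h : i ≤ k
      · rw [if_pos h, if_pos (Fin.le_def.1 h)]
        have hne : Real.sqrt ((k : ℕ) + 1) ≠ 0 :=
          ne_of_gt (Real.sqrt_pos.2 (by positivity))
        field_simp
      · rw [if_neg h, if_neg (fun hh => h (Fin.le_def.2 hh))]
        ring
    rw [Finset.sum_congr rfl (fun k _ => step k)]
    rw [Fin.sum_univ_eq_sum_range (fun n => if (i : ℕ) ≤ n then A n / s else 0) m]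
    have hfilter : Finset.Ico (i : ℕ) m = (Finset.range m).filter (fun n => (i : ℕ) ≤ n) := by
      ext n
      simp [Finset.mem_Ico, Finset.mem_range, Finset.mem_filter, and_comm]
    rw [← Finset.sum_filter, ← hfilter, ← Finset.sum_div, htel i]
    rw [div_eq_inv_mul]
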